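/- Beta-soundness of the subtyping preorders: (1) if τ is not equivalent to ωT and ⋀_{i∈I}(δi→τi) ≤D δ→τ, then there is a nonempty J ⊆ I with δ ≤D ⋀_{j∈J} δj and ⋀_{j∈J} τj ≤T τ, and conversely; (2) if κ is not equivalent to ωC and ⋀_{i∈I}(σi→κi) ≤T σ→κ, then there is a nonempty J ⊆ I with σ ≤S ⋀_{j∈J} σj and ⋀_{j∈J} κj ≤C κ, and conversely. -/

import Mathlib

open Classical

/-- Locations -/
abbrev Loc := ℕ

/-! ### Syntax of λimp (de Bruijn indices) -/

mutual
inductive Val : Type where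
  | var : ℕ → Val
  | lam : Comp → Val
inductive Comp : Type where
  | ret  : Val → Comp                     -- unit V
  | bind : Comp → Val → Comp              -- M ⋆ V
  | get  : Loc → Comp → Comp              -- get_ℓ(λ.M)
  | set  : Loc → Val → Comp → Comp        -- set_ℓ(V, M)
end

/-! ### Store and lookup terms -/

mutual
inductive Store : Type where
  | emp : Store
  | upd : Loc → Lkp → Store → Store       -- set_ℓ(u, s)
inductive Lkp : Type where
  | val : Val → Lkp
  | lkp : Loc → Store → Lkp               -- get_ℓ(s)
end

def Store.dom : Store → Finset Loc
  | .emp => ∅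
  | .upd ℓ _ s => insert ℓ s.dom

/-- s ∖ ℓ -/
def Store.erase (ℓ : Loc) : Store → Store
  | .emp => .emp
  | .upd ℓ' u s => if ℓ' = ℓ then s.erase ℓ else .upd ℓ' u (s.erase ℓ)

/-! ### The equational store theory -/

mutual
/-- ⊢ s = t -/
inductive StEq : Store → Store → Prop where
  | refl (s) : StEq s s
  | symm : StEq s t → StEq t s
  | trans : StEq s t → StEq t r → StEq s r
  | congr : LkEq u u' → StEq s s' → StEq (.upd ℓ u s) (.upd ℓ u' s')
  | setGet (h : ℓ ∈ s.dom) : StEq (.upd ℓ (.lkp ℓ s) s) s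
  | overwrite : StEq (.upd ℓ u (.upd ℓ w s)) (.upd ℓ u s)
  | commute (h : ℓ ≠ ℓ') :
      StEq (.upd ℓ u (.upd ℓ' w s)) (.upd ℓ' w (.upd ℓ u s))
/-- ⊢ u = u' -/
inductive LkEq : Lkp → Lkp → Prop where
  | refl (u) : LkEq u u
  | symm : LkEq u v → LkEq v u
  | trans : LkEq u v → LkEq v w → LkEq u w
  | congr (ℓ) (h : ℓ ∈ s.dom) : StEq s s' → LkEq (.lkp ℓ s) (.lkp ℓ s')
  | getSet : LkEq (.lkp ℓ (.upd ℓ u s)) u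
  | getSetNe (h : ℓ ≠ ℓ') : LkEq (.lkp ℓ (.upd ℓ' u s)) (.lkp ℓ s)
end

/-- Extensional equivalence s ≃ t of store terms. -/
def StExtEq (s t : Store) : Prop :=
  s.dom = t.dom ∧ ∀ ℓ ∈ s.dom, LkEq (.lkp ℓ s) (.lkp ℓ t)

/-! ### Normal forms of stores -/

def Store.size : Store → ℕ
  | .emp => 0
  | .upd _ _ s => s.size + 1

theorem Store.erase_size (ℓ : Loc) : (s : Store) → (s.erase ℓ).size ≤ s.size
  | .emp => le_refl _
  | .upd ℓ' u s => by
      unfold Store.erase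
      by_cases h : ℓ' = ℓ
      · simpa [h, Store.size] using le_trans (Store.erase_size ℓ s) (Nat.le_succ _)
      · simpa [h, Store.size] using Nat.succ_le_succ (Store.erase_size ℓ s)

def Store.nf : Store → Store
  | .emp => .emp
  | .upd ℓ u s => .upd ℓ u ((s.erase ℓ).nf)
termination_by s => s.size
decreasing_by
  simp only [Store.size]
  exact Nat.lt_succ_of_le (Store.erase_size ℓ s)

/-! ### Closedness -/

mutual
def Val.ClosedUnder : ℕ → Val → Prop
  | k, .var n => n < k
  | k, .lam M => Comp.ClosedUnder (k+1) M
def Comp.ClosedUnder : ℕ → Comp → Prop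
  | k, .ret V => Val.ClosedUnder k V
  | k, .bind M V => Comp.ClosedUnder k M ∧ Val.ClosedUnder k V
  | k, .get _ M => Comp.ClosedUnder (k+1) M
  | k, .set _ V M => Val.ClosedUnder k V ∧ Comp.ClosedUnder k M
end

mutual
def Store.Closed : Store → Prop
  | .emp => True
  | .upd _ u s => u.Closed ∧ s.Closed
def Lkp.Closed : Lkp → Prop
  | .val V => Val.ClosedUnder 0 V
  | .lkp _ s => s.Closed
end

/-! ### Substitution -/

mutual
def Val.shiftAux (c : ℕ) : Val → Val
  | .var n => if n < c then .var n else .var (n+1)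
  | .lam M => .lam (Comp.shiftAux (c+1) M)
def Comp.shiftAux (c : ℕ) : Comp → Comp
  | .ret V => .ret (V.shiftAux c)
  | .bind M V => .bind (M.shiftAux c) (V.shiftAux c)
  | .get ℓ M => .get ℓ (M.shiftAux (c+1))
  | .set ℓ V M => .set ℓ (V.shiftAux c) (M.shiftAux c)
end

mutual
/-- capture-avoiding substitution of `W` for the variable `k` in a value -/
def Val.substV (k : ℕ) (W : Val) : Val → Val
  | .var n => if n = k then W else if k < n then .var (n-1) else .var n
  | .lam M => .lam (Comp.substC (k+1) (Val.shiftAux 0 W) M)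
/-- capture-avoiding substitution of `W` for the variable `k` in a computation: M[W/k] -/
def Comp.substC (k : ℕ) (W : Val) : Comp → Comp
  | .ret V => .ret (Val.substV k W V)
  | .bind M V => .bind (Comp.substC k W M) (Val.substV k W V)
  | .get ℓ M => .get ℓ (Comp.substC (k+1) (Val.shiftAux 0 W) M)
  | .set ℓ V M => .set ℓ (Val.substV k W V) (Comp.substC k W M)
end

/-- simultaneous substitution of closed values for the free variables 0,…,n-1 -/
def msubst (Vs : List Val) (M : Comp) : Comp :=
  Vs.foldl (fun acc V => Comp.substC 0 V acc) M

/-! ### Small-step reduction on configurations -/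

inductive Red : Comp × Store → Comp × Store → Prop where
  | beta : Red (.bind (.ret V) (.lam M), s) (Comp.substC 0 V M, s)
  | bindl : Red (M, s) (N, t) → Red (.bind M V, s) (.bind N V, t)
  | get : LkEq (.lkp ℓ s) (.val V) → Red (.get ℓ M, s) (Comp.substC 0 V M, s)
  | set : Red (.set ℓ V M, s) (M, .upd ℓ (.val V) s)

/-- reflexive-transitive closure →* -/
def RedStar : Comp × Store → Comp × Store → Prop := Relation.ReflTransGen Red

/-! ### Big-step convergence -/

inductive BigStep : Comp → Store → Val → Store → Prop where
  | ret : BigStep (.ret V) s V s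
  | bind : BigStep M s V s' → BigStep (Comp.substC 0 V N) s' W t →
      BigStep (.bind M (.lam N)) s W t
  | get : LkEq (.lkp ℓ s) (.val V) → BigStep (Comp.substC 0 V M) s W t →
      BigStep (.get ℓ M) s W t
  | set : BigStep M (.upd ℓ (.val V) s) W t → BigStep (.set ℓ V M) s W t

/-- the partial function M(s): the result (V,t) if (M,s) ⇓ (V,t), and ⊥ (i.e. `none`) otherwise -/
noncomputable def run (M : Comp) (s : Store) : Option (Val × Store) :=
  if h : ∃ p : Val × Store, BigStep M s p.1 p.2 then some h.choose else none

/-! ### Intersection types of the four sorts -/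

mutual
/-- value types δ -/
inductive TyD : Type where
  | arrow : TyD → TyT → TyD
  | inter : TyD → TyD → TyD
  | omega : TyD
/-- store types σ -/
inductive TyS : Type where
  | loc : Loc → TyD → TyS
  | inter : TyS → TyS → TyS
  | omega : TyS
/-- result types κ -/
inductive TyC : Type where
  | prod : TyD → TyS → TyC
  | inter : TyC → TyC → TyC
  | omega : TyC
/-- computation types τ -/
inductive TyT : Type where
  | arrow : TyS → TyC → TyT
  | inter : TyT → TyT → TyT
  | omega : TyT
end

def TyS.domS : TyS → Finset Loc
  | .loc ℓ _ => {ℓ}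
  | .inter σ σ' => σ.domS ∪ σ'.domS
  | .omega => ∅

/-! ### Subtyping -/

mutual
inductive SubD : TyD → TyD → Prop where
  | refl (δ) : SubD δ δ
  | trans : SubD δ₁ δ₂ → SubD δ₂ δ₃ → SubD δ₁ δ₃
  | leOmega (δ) : SubD δ .omega
  | interLeft : SubD (TyD.inter δ δ') δ
  | interRight : SubD (TyD.inter δ δ') δ'
  | interGlb : SubD δ δ₁ → SubD δ δ₂ → SubD δ (TyD.inter δ₁ δ₂)
  | interMono : SubD δ₁ δ₁' → SubD δ₂ δ₂' → SubD (TyD.inter δ₁ δ₂) (TyD.inter δ₁' δ₂')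
  | omegaArrow : SubD .omega (.arrow .omega .omega)
  | arrowInter : SubD ((TyD.arrow δ τ).inter (.arrow δ τ')) (TyD.arrow δ (TyT.inter τ τ'))
  | arrowMono : SubD δ' δ → SubT τ τ' → SubD (.arrow δ τ) (.arrow δ' τ')
inductive SubS : TyS → TyS → Prop where
  | refl (σ) : SubS σ σ
  | trans : SubS σ₁ σ₂ → SubS σ₂ σ₃ → SubS σ₁ σ₃
  | leOmega (σ) : SubS σ .omega
  | interLeft : SubS (TyS.inter σ σ') σ
  | interRight : SubS (TyS.inter σ σ') σ'
  | interGlb : SubS σ σ₁ → SubS σ σ₂ → SubS σ (TyS.inter σ₁ σ₂)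
  | interMono : SubS σ₁ σ₁' → SubS σ₂ σ₂' → SubS (TyS.inter σ₁ σ₂) (TyS.inter σ₁' σ₂')
  | locInter : SubS ((TyS.loc ℓ δ).inter (.loc ℓ δ')) (TyS.loc ℓ (TyD.inter δ δ'))
  | locMono : SubD δ δ' → SubS (.loc ℓ δ) (.loc ℓ δ')
inductive SubC : TyC → TyC → Prop where
  | refl (κ) : SubC κ κ
  | trans : SubC κ₁ κ₂ → SubC κ₂ κ₃ → SubC κ₁ κ₃
  | leOmega (κ) : SubC κ .omega
  | interLeft : SubC (TyC.inter κ κ') κ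
  | interRight : SubC (TyC.inter κ κ') κ'
  | interGlb : SubC κ κ₁ → SubC κ κ₂ → SubC κ (TyC.inter κ₁ κ₂)
  | interMono : SubC κ₁ κ₁' → SubC κ₂ κ₂' → SubC (TyC.inter κ₁ κ₂) (TyC.inter κ₁' κ₂')
  | omegaProd : SubC .omega (.prod .omega .omega)
  | prodInter : SubC ((TyC.prod δ σ).inter (.prod δ' σ')) (TyC.prod (TyD.inter δ δ') (TyS.inter σ σ'))
  | prodMono : SubD δ δ' → SubS σ σ' → SubC (.prod δ σ) (.prod δ' σ')
inductive SubT : TyT → TyT → Prop where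
  | refl (τ) : SubT τ τ
  | trans : SubT τ₁ τ₂ → SubT τ₂ τ₃ → SubT τ₁ τ₃
  | leOmega (τ) : SubT τ .omega
  | interLeft : SubT (TyT.inter τ τ') τ
  | interRight : SubT (TyT.inter τ τ') τ'
  | interGlb : SubT τ τ₁ → SubT τ τ₂ → SubT τ (TyT.inter τ₁ τ₂)
  | interMono : SubT τ₁ τ₁' → SubT τ₂ τ₂' → SubT (TyT.inter τ₁ τ₂) (TyT.inter τ₁' τ₂')
  | omegaArrow : SubT .omega (.arrow .omega .omega)
  | arrowInter : SubT ((TyT.arrow σ κ).inter (.arrow σ κ')) (TyT.arrow σ (TyC.inter κ κ'))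
  | arrowMono : SubS σ' σ → SubC κ κ' → SubT (.arrow σ κ) (.arrow σ' κ')
end

/-! ### Finite intersections -/

def InterD (l : List TyD) : TyD := l.foldr TyD.inter TyD.omega
def InterS (l : List TyS) : TyS := l.foldr TyS.inter TyS.omega
def InterC (l : List TyC) : TyC := l.foldr TyC.inter TyC.omega
def InterT (l : List TyT) : TyT := l.foldr TyT.inter TyT.omega

/-! ### Type assignment -/

/-- typing contexts (de Bruijn) -/
abbrev Ctx := List TyD

mutual
inductive TypV : Ctx → Val → TyD → Prop where
  | var : Γ[n]? = some δ → TypV Γ (.var n) δ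
  | lam : TypC (δ :: Γ) M τ → TypV Γ (.lam M) (.arrow δ τ)
  | omega : TypV Γ V .omega
  | inter : TypV Γ V δ → TypV Γ V δ' → TypV Γ V (TyD.inter δ δ')
  | sub : TypV Γ V δ → SubD δ δ' → TypV Γ V δ'
inductive TypC : Ctx → Comp → TyT → Prop where
  | ret : TypV Γ V δ → TypC Γ (.ret V) (.arrow σ (.prod δ σ))
  | bind : TypC Γ M (.arrow σ (.prod δ' σ')) →
      TypV Γ V (.arrow δ' (.arrow σ' (.prod δ'' σ''))) →
      TypC Γ (.bind M V) (.arrow σ (.prod δ'' σ''))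
  | get : TypC (δ :: Γ) M (.arrow σ κ) →
      TypC Γ (.get ℓ M) (.arrow ((TyS.loc ℓ δ).inter σ) κ)
  | set : TypV Γ V δ → TypC Γ M (.arrow ((TyS.loc ℓ δ).inter σ) κ) →
      ℓ ∉ σ.domS → TypC Γ (.set ℓ V M) (.arrow σ κ)
  | omega : TypC Γ M .omega
  | inter : TypC Γ M τ → TypC Γ M τ' → TypC Γ M (TyT.inter τ τ')
  | sub : TypC Γ M τ → SubT τ τ' → TypC Γ M τ'
end

mutual
inductive TypS : Ctx → Store → TyS → Prop where
  | updA : TypL Γ u δ → TypS Γ (.upd ℓ u s) (.loc ℓ δ)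
  | updB : TypS Γ s (.loc ℓ' δ) → ℓ ≠ ℓ' → TypS Γ (.upd ℓ u s) (.loc ℓ' δ)
  | omega : TypS Γ s .omega
  | inter : TypS Γ s σ → TypS Γ s σ' → TypS Γ s (TyS.inter σ σ')
  | sub : TypS Γ s σ → SubS σ σ' → TypS Γ s σ'
inductive TypL : Ctx → Lkp → TyD → Prop where
  | val : TypV Γ V δ → TypL Γ (.val V) δ
  | lkp : TypS Γ s (.loc ℓ δ) → TypL Γ (.lkp ℓ s) δ
  | omega : TypL Γ u .omega
  | inter : TypL Γ u δ → TypL Γ u δ' → TypL Γ u (TyD.inter δ δ')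
  | sub : TypL Γ u δ → SubD δ δ' → TypL Γ u δ'
end

inductive TypConf : Ctx → Comp → Store → TyC → Prop where
  | conf : TypC Γ M (.arrow σ κ) → TypS Γ s σ → TypConf Γ M s κ
  | omega : TypConf Γ M s .omega
  | inter : TypConf Γ M s κ → TypConf Γ M s κ' → TypConf Γ M s (TyC.inter κ κ')
  | sub : TypConf Γ M s κ → SubC κ κ' → TypConf Γ M s κ'

/-! ### Saturated sets -/

mutual
def SatD : TyD → Set Val
  | .omega => {V | Val.ClosedUnder 0 V}
  | .arrow δ τ =>
      {V | Val.ClosedUnder 0 V ∧ ∀ W ∈ SatD δ, Comp.bind (.ret W) V ∈ SatT τ}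
  | .inter δ δ' => SatD δ ∩ SatD δ'
def SatS : TyS → Set Store
  | .omega => {s | s.Closed}
  | .loc ℓ δ =>
      {s | s.Closed ∧ ℓ ∈ s.dom ∧ ∃ V ∈ SatD δ, LkEq (.lkp ℓ s) (.val V)}
  | .inter σ σ' => SatS σ ∩ SatS σ'
def SatC : TyC → Set (Option (Val × Store))
  | .omega => {r | ∀ V t, r = some (V, t) → Val.ClosedUnder 0 V ∧ Store.Closed t}
  | .prod δ σ => {r | ∃ V t, r = some (V, t) ∧ V ∈ SatD δ ∧ t ∈ SatS σ}
  | .inter κ κ' => SatC κ ∩ SatC κ'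
def SatT : TyT → Set Comp
  | .omega => {M | Comp.ClosedUnder 0 M}
  | .arrow σ κ => {M | Comp.ClosedUnder 0 M ∧ ∀ s ∈ SatS σ, run M s ∈ SatC κ}
  | .inter τ τ' => SatT τ ∩ SatT τ'
end
/-! ### Helper lemmas for finite intersections -/

theorem interD_le_mem {l : List TyD} {x : TyD} (hx : x ∈ l) : SubD (InterD l) x := by
  induction l with
  | nil => cases hx
  | cons a l ih =>
    rcases List.mem_cons.mp hx with rfl | hx
    · exact SubD.interLeft
    · exact SubD.trans SubD.interRight (ih hx)

theorem le_interD {l : List TyD} {δ : TyD} (h : ∀ x ∈ l, SubD δ x) : SubD δ (InterD l) := by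
  induction l with
  | nil => exact SubD.leOmega δ
  | cons a l ih =>
    exact SubD.interGlb (h a List.mem_cons_self) (ih fun x hx => h x (List.mem_cons_of_mem _ hx))

theorem interD_anti {l₁ l₂ : List TyD} (h : ∀ x ∈ l₁, x ∈ l₂) : SubD (InterD l₂) (InterD l₁) :=
  le_interD fun x hx => interD_le_mem (h x hx)

theorem interT_le_mem {l : List TyT} {x : TyT} (hx : x ∈ l) : SubT (InterT l) x := by
  induction l with
  | nil => cases hx
  | cons a l ih =>
    rcases List.mem_cons.mp hx with rfl | hx
    · exact SubT.interLeft
    · exact SubT.trans SubT.interRight (ih hx)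

theorem le_interT {l : List TyT} {τ : TyT} (h : ∀ x ∈ l, SubT τ x) : SubT τ (InterT l) := by
  induction l with
  | nil => exact SubT.leOmega τ
  | cons a l ih =>
    exact SubT.interGlb (h a List.mem_cons_self) (ih fun x hx => h x (List.mem_cons_of_mem _ hx))

theorem interT_anti {l₁ l₂ : List TyT} (h : ∀ x ∈ l₁, x ∈ l₂) : SubT (InterT l₂) (InterT l₁) :=
  le_interT fun x hx => interT_le_mem (h x hx)

theorem interS_le_mem {l : List TyS} {x : TyS} (hx : x ∈ l) : SubS (InterS l) x := by
  induction l with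
  | nil => cases hx
  | cons a l ih =>
    rcases List.mem_cons.mp hx with rfl | hx
    · exact SubS.interLeft
    · exact SubS.trans SubS.interRight (ih hx)

theorem le_interS {l : List TyS} {σ : TyS} (h : ∀ x ∈ l, SubS σ x) : SubS σ (InterS l) := by
  induction l with
  | nil => exact SubS.leOmega σ
  | cons a l ih =>
    exact SubS.interGlb (h a List.mem_cons_self) (ih fun x hx => h x (List.mem_cons_of_mem _ hx))

theorem interS_anti {l₁ l₂ : List TyS} (h : ∀ x ∈ l₁, x ∈ l₂) : SubS (InterS l₂) (InterS l₁) :=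
  le_interS fun x hx => interS_le_mem (h x hx)

theorem interC_le_mem {l : List TyC} {x : TyC} (hx : x ∈ l) : SubC (InterC l) x := by
  induction l with
  | nil => cases hx
  | cons a l ih =>
    rcases List.mem_cons.mp hx with rfl | hx
    · exact SubC.interLeft
    · exact SubC.trans SubC.interRight (ih hx)

theorem le_interC {l : List TyC} {κ : TyC} (h : ∀ x ∈ l, SubC κ x) : SubC κ (InterC l) := by
  induction l with
  | nil => exact SubC.leOmega κ
  | cons a l ih =>
    exact SubC.interGlb (h a List.mem_cons_self) (ih fun x hx => h x (List.mem_cons_of_mem _ hx))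

theorem interC_anti {l₁ l₂ : List TyC} (h : ∀ x ∈ l₁, x ∈ l₂) : SubC (InterC l₂) (InterC l₁) :=
  le_interC fun x hx => interC_le_mem (h x hx)

/-! ### Arrow components -/

def arrsD : TyD → List (TyD × TyT)
  | .arrow δ τ => [(δ, τ)]
  | .inter a b => arrsD a ++ arrsD b
  | .omega => []

def arrsT : TyT → List (TyS × TyC)
  | .arrow σ κ => [(σ, κ)]
  | .inter a b => arrsT a ++ arrsT b
  | .omega => []

theorem mem_arrsD_interD {l : List TyD} {p : TyD × TyT} :
    p ∈ arrsD (InterD l) ↔ ∃ x ∈ l, p ∈ arrsD x := by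
  induction l with
  | nil => simp [InterD, arrsD]
  | cons a l ih =>
    show p ∈ arrsD a ++ arrsD (InterD l) ↔ _
    simp only [List.mem_append, ih, List.mem_cons]
    constructor
    · rintro (h | ⟨x, hx, h⟩)
      exacts [⟨a, Or.inl rfl, h⟩, ⟨x, Or.inr hx, h⟩]
    · rintro ⟨x, (rfl | hx), h⟩
      exacts [Or.inl h, Or.inr ⟨x, hx, h⟩]

theorem mem_arrsT_interT {l : List TyT} {p : TyS × TyC} :
    p ∈ arrsT (InterT l) ↔ ∃ x ∈ l, p ∈ arrsT x := by
  induction l with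
  | nil => simp [InterT, arrsT]
  | cons a l ih =>
    show p ∈ arrsT a ++ arrsT (InterT l) ↔ _
    simp only [List.mem_append, ih, List.mem_cons]
    constructor
    · rintro (h | ⟨x, hx, h⟩)
      exacts [⟨a, Or.inl rfl, h⟩, ⟨x, Or.inr hx, h⟩]
    · rintro ⟨x, (rfl | hx), h⟩
      exacts [Or.inl h, Or.inr ⟨x, hx, h⟩]

/-! ### Intersections of arrows -/

theorem interArrowsD : ∀ (l : List (TyD × TyT)), l ≠ [] →
    SubD (InterD (l.map fun p => TyD.arrow p.1 p.2))
      (TyD.arrow (InterD (l.map Prod.fst)) (InterT (l.map Prod.snd)))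
  | [], h => absurd rfl h
  | [p], _ =>
      SubD.trans SubD.interLeft
        (SubD.arrowMono SubD.interLeft (SubT.interGlb (SubT.refl _) (SubT.leOmega _)))
  | p :: q :: l, _ => by
      have ih := interArrowsD (q :: l) (by simp)
      refine SubD.trans (SubD.interMono (SubD.refl _) ih) ?_
      exact SubD.trans
        (SubD.interMono (SubD.arrowMono SubD.interLeft (SubT.refl _))
          (SubD.arrowMono SubD.interRight (SubT.refl _))) SubD.arrowInter

theorem interArrowsT : ∀ (l : List (TyS × TyC)), l ≠ [] →
    SubT (InterT (l.map fun p => TyT.arrow p.1 p.2))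
      (TyT.arrow (InterS (l.map Prod.fst)) (InterC (l.map Prod.snd)))
  | [], h => absurd rfl h
  | [p], _ =>
      SubT.trans SubT.interLeft
        (SubT.arrowMono SubS.interLeft (SubC.interGlb (SubC.refl _) (SubC.leOmega _)))
  | p :: q :: l, _ => by
      have ih := interArrowsT (q :: l) (by simp)
      refine SubT.trans (SubT.interMono (SubT.refl _) ih) ?_
      exact SubT.trans
        (SubT.interMono (SubT.arrowMono SubS.interLeft (SubC.refl _))
          (SubT.arrowMono SubS.interRight (SubC.refl _))) SubT.arrowInter

/-! ### Combining decompositions -/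

theorem combineD {a : TyD} : ∀ (Jn : List (TyD × TyT)), Jn ≠ [] →
    (∀ p ∈ Jn, ∃ K : List (TyD × TyT), K ≠ [] ∧ (∀ q ∈ K, q ∈ arrsD a) ∧
      SubD p.1 (InterD (K.map Prod.fst)) ∧ SubT (InterT (K.map Prod.snd)) p.2) →
    ∃ K : List (TyD × TyT), K ≠ [] ∧ (∀ q ∈ K, q ∈ arrsD a) ∧
      SubD (InterD (Jn.map Prod.fst)) (InterD (K.map Prod.fst)) ∧
      SubT (InterT (K.map Prod.snd)) (InterT (Jn.map Prod.snd))
  | [], h, _ => absurd rfl h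
  | [p], _, hall => by
      obtain ⟨K, hKne, hKmem, h1, h2⟩ := hall p (by simp)
      exact ⟨K, hKne, hKmem, SubD.trans SubD.interLeft h1,
        SubT.interGlb h2 (SubT.leOmega _)⟩
  | p :: q :: l, _, hall => by
      obtain ⟨Kp, hKpne, hKpmem, hp1, hp2⟩ := hall p (by simp)
      obtain ⟨Kl, hKlne, hKlmem, hl1, hl2⟩ :=
        combineD (q :: l) (by simp) (fun r hr => hall r (List.mem_cons_of_mem _ hr))
      refine ⟨Kp ++ Kl, fun h => hKpne (List.append_eq_nil_iff.mp h).1, ?_, ?_, ?_⟩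
      · intro r hr
        rcases List.mem_append.mp hr with h | h
        exacts [hKpmem r h, hKlmem r h]
      · apply le_interD
        intro x hx
        rw [List.map_append] at hx
        rcases List.mem_append.mp hx with h | h
        · exact SubD.trans SubD.interLeft (SubD.trans hp1 (interD_le_mem h))
        · exact SubD.trans SubD.interRight (SubD.trans hl1 (interD_le_mem h))
      · refine SubT.interGlb ?_ ?_
        · refine SubT.trans (interT_anti (l₁ := Kp.map Prod.snd) ?_) hp2
          intro x hx; rw [List.map_append]; exact List.mem_append_left _ hx
        · refine SubT.trans (interT_anti ?_) hl2
          intro x hx; rw [List.map_append]; exact List.mem_append_right _ hx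

theorem combineT {a : TyT} : ∀ (Jn : List (TyS × TyC)), Jn ≠ [] →
    (∀ p ∈ Jn, ∃ K : List (TyS × TyC), K ≠ [] ∧ (∀ q ∈ K, q ∈ arrsT a) ∧
      SubS p.1 (InterS (K.map Prod.fst)) ∧ SubC (InterC (K.map Prod.snd)) p.2) →
    ∃ K : List (TyS × TyC), K ≠ [] ∧ (∀ q ∈ K, q ∈ arrsT a) ∧
      SubS (InterS (Jn.map Prod.fst)) (InterS (K.map Prod.fst)) ∧
      SubC (InterC (K.map Prod.snd)) (InterC (Jn.map Prod.snd))
  | [], h, _ => absurd rfl h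
  | [p], _, hall => by
      obtain ⟨K, hKne, hKmem, h1, h2⟩ := hall p (by simp)
      exact ⟨K, hKne, hKmem, SubS.trans SubS.interLeft h1,
        SubC.interGlb h2 (SubC.leOmega _)⟩
  | p :: q :: l, _, hall => by
      obtain ⟨Kp, hKpne, hKpmem, hp1, hp2⟩ := hall p (by simp)
      obtain ⟨Kl, hKlne, hKlmem, hl1, hl2⟩ :=
        combineT (q :: l) (by simp) (fun r hr => hall r (List.mem_cons_of_mem _ hr))
      refine ⟨Kp ++ Kl, fun h => hKpne (List.append_eq_nil_iff.mp h).1, ?_, ?_, ?_⟩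
      · intro r hr
        rcases List.mem_append.mp hr with h | h
        exacts [hKpmem r h, hKlmem r h]
      · apply le_interS
        intro x hx
        rw [List.map_append] at hx
        rcases List.mem_append.mp hx with h | h
        · exact SubS.trans SubS.interLeft (SubS.trans hp1 (interS_le_mem h))
        · exact SubS.trans SubS.interRight (SubS.trans hl1 (interS_le_mem h))
      · refine SubC.interGlb ?_ ?_
        · refine SubC.trans (interC_anti (l₁ := Kp.map Prod.snd) ?_) hp2
          intro x hx; rw [List.map_append]; exact List.mem_append_left _ hx
        · refine SubC.trans (interC_anti ?_) hl2
          intro x hx; rw [List.map_append]; exact List.mem_append_right _ hx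

/-! ### Beta soundness, main inductions -/

def Pd (a b : TyD) : Prop :=
  ∀ δ τ, (δ, τ) ∈ arrsD b → ¬ SubT .omega τ →
    ∃ J : List (TyD × TyT), J ≠ [] ∧ (∀ p ∈ J, p ∈ arrsD a) ∧
      SubD δ (InterD (J.map Prod.fst)) ∧ SubT (InterT (J.map Prod.snd)) τ

def Pt (a b : TyT) : Prop :=
  ∀ σ κ, (σ, κ) ∈ arrsT b → ¬ SubC .omega κ →
    ∃ J : List (TyS × TyC), J ≠ [] ∧ (∀ p ∈ J, p ∈ arrsT a) ∧
      SubS σ (InterS (J.map Prod.fst)) ∧ SubC (InterC (J.map Prod.snd)) κ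

theorem singletonPd {a : TyD} {δ₀ : TyD} {τ₀ : TyT} (h : (δ₀, τ₀) ∈ arrsD a) :
    ∃ J : List (TyD × TyT), J ≠ [] ∧ (∀ p ∈ J, p ∈ arrsD a) ∧
      SubD δ₀ (InterD (J.map Prod.fst)) ∧ SubT (InterT (J.map Prod.snd)) τ₀ :=
  ⟨[(δ₀, τ₀)], by simp, by simpa using h,
    SubD.interGlb (SubD.refl _) (SubD.leOmega _), SubT.interLeft⟩

theorem singletonPt {a : TyT} {σ₀ : TyS} {κ₀ : TyC} (h : (σ₀, κ₀) ∈ arrsT a) :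
    ∃ J : List (TyS × TyC), J ≠ [] ∧ (∀ p ∈ J, p ∈ arrsT a) ∧
      SubS σ₀ (InterS (J.map Prod.fst)) ∧ SubC (InterC (J.map Prod.snd)) κ₀ :=
  ⟨[(σ₀, κ₀)], by simp, by simpa using h,
    SubS.interGlb (SubS.refl _) (SubS.leOmega _), SubC.interLeft⟩


theorem betaD_aux {a b : TyD} (h : SubD a b) : Pd a b := by
  induction h using SubD.rec (motive_2 := fun _ _ _ => True)
    (motive_3 := fun _ _ _ => True) (motive_4 := fun _ _ _ => True)
  all_goals try exact trivial
  case refl => exact fun δ₀ τ₀ hmem _ => singletonPd hmem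
  case trans ih12 ih23 =>
    intro δ₀ τ₀ hmem hτ
    obtain ⟨J, hJne, hJmem, hJ1, hJ2⟩ := ih23 δ₀ τ₀ hmem hτ
    classical
    set Jn := J.filter (fun p => decide (¬ SubT .omega p.2)) with hJn
    have hJnsub : ∀ p ∈ Jn, p ∈ J := fun p hp => List.mem_of_mem_filter hp
    have hJnprop : ∀ p ∈ Jn, ¬ SubT .omega p.2 := fun p hp => by
      simpa using List.of_mem_filter hp
    have hmemn : ∀ p ∈ J, p ∉ Jn → SubT .omega p.2 := by
      intro p hp hn
      by_contra hc
      exact hn (List.mem_filter.mpr ⟨hp, by simpa using hc⟩)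
    have hJnne : Jn ≠ [] := by
      intro he
      apply hτ
      refine SubT.trans (le_interT (l := J.map Prod.snd) ?_) hJ2
      intro x hx
      obtain ⟨p, hp, rfl⟩ := List.mem_map.mp hx
      exact hmemn p hp (by simp [he])
    obtain ⟨K, hKne, hKmem, hK1, hK2⟩ := combineD Jn hJnne
      (fun p hp => ih12 p.1 p.2 (hJmem p (hJnsub p hp)) (hJnprop p hp))
    refine ⟨K, hKne, hKmem, ?_, ?_⟩
    · refine SubD.trans hJ1 (SubD.trans (interD_anti ?_) hK1)
      intro x hx
      obtain ⟨p, hp, rfl⟩ := List.mem_map.mp hx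
      exact List.mem_map_of_mem (hJnsub p hp)
    · have h3 : SubT (InterT (Jn.map Prod.snd)) (InterT (J.map Prod.snd)) := by
        apply le_interT
        intro x hx
        obtain ⟨p, hp, rfl⟩ := List.mem_map.mp hx
        by_cases hpn : p ∈ Jn
        · exact interT_le_mem (List.mem_map_of_mem hpn)
        · exact SubT.trans (SubT.leOmega _) (hmemn p hp hpn)
      exact SubT.trans hK2 (SubT.trans h3 hJ2)
  case leOmega =>
    intro δ₀ τ₀ hmem _
    simp [arrsD] at hmem
  case interLeft =>
    intro δ₀ τ₀ hmem _
    exact singletonPd (List.mem_append_left _ hmem)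
  case interRight =>
    intro δ₀ τ₀ hmem _
    exact singletonPd (List.mem_append_right _ hmem)
  case interGlb ih1 ih2 =>
    intro δ₀ τ₀ hmem hτ
    rcases List.mem_append.mp hmem with h | h
    · exact ih1 δ₀ τ₀ h hτ
    · exact ih2 δ₀ τ₀ h hτ
  case interMono ih1 ih2 =>
    intro δ₀ τ₀ hmem hτ
    rcases List.mem_append.mp hmem with h | h
    · obtain ⟨J, hne, hm, h1, h2⟩ := ih1 δ₀ τ₀ h hτ
      exact ⟨J, hne, fun p hp => List.mem_append_left _ (hm p hp), h1, h2⟩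
    · obtain ⟨J, hne, hm, h1, h2⟩ := ih2 δ₀ τ₀ h hτ
      exact ⟨J, hne, fun p hp => List.mem_append_right _ (hm p hp), h1, h2⟩
  case omegaArrow =>
    intro δ₀ τ₀ hmem hτ
    simp [arrsD] at hmem
    obtain ⟨rfl, rfl⟩ := hmem
    exact absurd (SubT.leOmega _) hτ
  case arrowInter δ τ τ' =>
    intro δ₀ τ₀ hmem hτ
    have hmem' : δ₀ = δ ∧ τ₀ = TyT.inter τ τ' := by simpa [arrsD] using hmem
    obtain ⟨rfl, rfl⟩ := hmem'
    refine ⟨[(δ₀, τ), (δ₀, τ')], by simp, by simp [arrsD], ?_, ?_⟩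
    · exact SubD.interGlb (SubD.refl _) (SubD.interGlb (SubD.refl _) (SubD.leOmega _))
    · exact SubT.interGlb SubT.interLeft (SubT.trans SubT.interRight SubT.interLeft)
  case arrowMono δ' δ τ τ' h1 h2 _ _ =>
    intro δ₀ τ₀ hmem hτ
    have hmem' : δ₀ = δ' ∧ τ₀ = τ' := by simpa [arrsD] using hmem
    obtain ⟨rfl, rfl⟩ := hmem'
    exact ⟨[(δ, τ)], by simp, by simp [arrsD],
      SubD.interGlb h1 (SubD.leOmega _), SubT.trans SubT.interLeft h2⟩


theorem betaT_aux {a b : TyT} (h : SubT a b) : Pt a b := by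
  induction h using SubT.rec (motive_1 := fun _ _ _ => True)
    (motive_2 := fun _ _ _ => True) (motive_3 := fun _ _ _ => True)
  all_goals try exact trivial
  case refl => exact fun δ₀ τ₀ hmem _ => singletonPt hmem
  case trans ih12 ih23 =>
    intro δ₀ τ₀ hmem hτ
    obtain ⟨J, hJne, hJmem, hJ1, hJ2⟩ := ih23 δ₀ τ₀ hmem hτ
    classical
    set Jn := J.filter (fun p => decide (¬ SubC .omega p.2)) with hJn
    have hJnsub : ∀ p ∈ Jn, p ∈ J := fun p hp => List.mem_of_mem_filter hp
    have hJnprop : ∀ p ∈ Jn, ¬ SubC .omega p.2 := fun p hp => by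
      simpa using List.of_mem_filter hp
    have hmemn : ∀ p ∈ J, p ∉ Jn → SubC .omega p.2 := by
      intro p hp hn
      by_contra hc
      exact hn (List.mem_filter.mpr ⟨hp, by simpa using hc⟩)
    have hJnne : Jn ≠ [] := by
      intro he
      apply hτ
      refine SubC.trans (le_interC (l := J.map Prod.snd) ?_) hJ2
      intro x hx
      obtain ⟨p, hp, rfl⟩ := List.mem_map.mp hx
      exact hmemn p hp (by simp [he])
    obtain ⟨K, hKne, hKmem, hK1, hK2⟩ := combineT Jn hJnne
      (fun p hp => ih12 p.1 p.2 (hJmem p (hJnsub p hp)) (hJnprop p hp))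
    refine ⟨K, hKne, hKmem, ?_, ?_⟩
    · refine SubS.trans hJ1 (SubS.trans (interS_anti ?_) hK1)
      intro x hx
      obtain ⟨p, hp, rfl⟩ := List.mem_map.mp hx
      exact List.mem_map_of_mem (hJnsub p hp)
    · have h3 : SubC (InterC (Jn.map Prod.snd)) (InterC (J.map Prod.snd)) := by
        apply le_interC
        intro x hx
        obtain ⟨p, hp, rfl⟩ := List.mem_map.mp hx
        by_cases hpn : p ∈ Jn
        · exact interC_le_mem (List.mem_map_of_mem hpn)
        · exact SubC.trans (SubC.leOmega _) (hmemn p hp hpn)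
      exact SubC.trans hK2 (SubC.trans h3 hJ2)
  case leOmega =>
    intro δ₀ τ₀ hmem _
    simp [arrsT] at hmem
  case interLeft =>
    intro δ₀ τ₀ hmem _
    exact singletonPt (List.mem_append_left _ hmem)
  case interRight =>
    intro δ₀ τ₀ hmem _
    exact singletonPt (List.mem_append_right _ hmem)
  case interGlb ih1 ih2 =>
    intro δ₀ τ₀ hmem hτ
    rcases List.mem_append.mp hmem with h | h
    · exact ih1 δ₀ τ₀ h hτ
    · exact ih2 δ₀ τ₀ h hτ
  case interMono ih1 ih2 =>
    intro δ₀ τ₀ hmem hτ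
    rcases List.mem_append.mp hmem with h | h
    · obtain ⟨J, hne, hm, h1, h2⟩ := ih1 δ₀ τ₀ h hτ
      exact ⟨J, hne, fun p hp => List.mem_append_left _ (hm p hp), h1, h2⟩
    · obtain ⟨J, hne, hm, h1, h2⟩ := ih2 δ₀ τ₀ h hτ
      exact ⟨J, hne, fun p hp => List.mem_append_right _ (hm p hp), h1, h2⟩
  case omegaArrow =>
    intro δ₀ τ₀ hmem hτ
    simp [arrsT] at hmem
    obtain ⟨rfl, rfl⟩ := hmem
    exact absurd (SubC.leOmega _) hτ
  case arrowInter δ τ τ' =>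
    intro δ₀ τ₀ hmem hτ
    have hmem' : δ₀ = δ ∧ τ₀ = TyC.inter τ τ' := by simpa [arrsT] using hmem
    obtain ⟨rfl, rfl⟩ := hmem'
    refine ⟨[(δ₀, τ), (δ₀, τ')], by simp, by simp [arrsT], ?_, ?_⟩
    · exact SubS.interGlb (SubS.refl _) (SubS.interGlb (SubS.refl _) (SubS.leOmega _))
    · exact SubC.interGlb SubC.interLeft (SubC.trans SubC.interRight SubC.interLeft)
  case arrowMono δ' δ τ τ' h1 h2 _ _ =>
    intro δ₀ τ₀ hmem hτ
    have hmem' : δ₀ = δ' ∧ τ₀ = τ' := by simpa [arrsT] using hmem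
    obtain ⟨rfl, rfl⟩ := hmem'
    exact ⟨[(δ, τ)], by simp, by simp [arrsT],
      SubS.interGlb h1 (SubS.leOmega _), SubC.trans SubC.interLeft h2⟩

theorem exists_index_list {α : Type} {n : ℕ} {f : Fin n → α} :
    ∀ (J : List α), (∀ p ∈ J, ∃ i, p = f i) → ∃ J' : List (Fin n), J'.map f = J
  | [], _ => ⟨[], rfl⟩
  | p :: J, h => by
      obtain ⟨i, rfl⟩ := h p List.mem_cons_self
      obtain ⟨J', rfl⟩ := exists_index_list J (fun q hq => h q (List.mem_cons_of_mem _ hq))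
      exact ⟨i :: J', rfl⟩

theorem beta_soundness_D (n : ℕ) (ds : Fin n → TyD) (ts : Fin n → TyT) (δ : TyD) (τ : TyT)
    (hτ : ¬ SubT .omega τ) :
    SubD (InterD (List.ofFn fun i => TyD.arrow (ds i) (ts i))) (.arrow δ τ) ↔
      ∃ J : List (Fin n), J ≠ [] ∧
        SubD δ (InterD (J.map ds)) ∧ SubT (InterT (J.map ts)) τ := by
  constructor
  · intro h
    obtain ⟨J, hJne, hJmem, h1, h2⟩ := betaD_aux h δ τ (by simp [arrsD]) hτ
    have hidx : ∀ p ∈ J, ∃ i : Fin n, p = (ds i, ts i) := by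
      intro p hp
      have hm := mem_arrsD_interD.mp (hJmem p hp)
      obtain ⟨x, hx, hpx⟩ := hm
      obtain ⟨i, rfl⟩ := List.mem_ofFn.mp hx
      refine ⟨i, ?_⟩
      simpa [arrsD] using hpx
    obtain ⟨J', hJ'⟩ := exists_index_list J hidx
    refine ⟨J', ?_, ?_, ?_⟩
    · rintro rfl
      exact hJne hJ'.symm
    · rw [← hJ', List.map_map] at h1
      exact h1
    · rw [← hJ', List.map_map] at h2
      exact h2
  · rintro ⟨J, hJne, h1, h2⟩
    have step1 : SubD (InterD (List.ofFn fun i => TyD.arrow (ds i) (ts i)))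
        (InterD (J.map fun i => TyD.arrow (ds i) (ts i))) := by
      apply interD_anti
      intro x hx
      obtain ⟨i, _, rfl⟩ := List.mem_map.mp hx
      exact List.mem_ofFn.mpr ⟨i, rfl⟩
    have step2 := interArrowsD (J.map fun i => (ds i, ts i))
      (by simpa using hJne)
    rw [List.map_map, List.map_map, List.map_map] at step2
    exact SubD.trans step1 (SubD.trans step2 (SubD.arrowMono h1 h2))

theorem beta_soundness_T (n : ℕ) (ss : Fin n → TyS) (ks : Fin n → TyC) (σ : TyS) (κ : TyC)
    (hκ : ¬ SubC .omega κ) :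
    SubT (InterT (List.ofFn fun i => TyT.arrow (ss i) (ks i))) (.arrow σ κ) ↔
      ∃ J : List (Fin n), J ≠ [] ∧
        SubS σ (InterS (J.map ss)) ∧ SubC (InterC (J.map ks)) κ := by
  constructor
  · intro h
    obtain ⟨J, hJne, hJmem, h1, h2⟩ := betaT_aux h σ κ (by simp [arrsT]) hκ
    have hidx : ∀ p ∈ J, ∃ i : Fin n, p = (ss i, ks i) := by
      intro p hp
      have hm := mem_arrsT_interT.mp (hJmem p hp)
      obtain ⟨x, hx, hpx⟩ := hm
      obtain ⟨i, rfl⟩ := List.mem_ofFn.mp hx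
      refine ⟨i, ?_⟩
      simpa [arrsT] using hpx
    obtain ⟨J', hJ'⟩ := exists_index_list J hidx
    refine ⟨J', ?_, ?_, ?_⟩
    · rintro rfl
      exact hJne hJ'.symm
    · rw [← hJ', List.map_map] at h1
      exact h1
    · rw [← hJ', List.map_map] at h2
      exact h2
  · rintro ⟨J, hJne, h1, h2⟩
    have step1 : SubT (InterT (List.ofFn fun i => TyT.arrow (ss i) (ks i)))
        (InterT (J.map fun i => TyT.arrow (ss i) (ks i))) := by
      apply interT_anti
      intro x hx
      obtain ⟨i, _, rfl⟩ := List.mem_map.mp hx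
      exact List.mem_ofFn.mpr ⟨i, rfl⟩
    have step2 := interArrowsT (J.map fun i => (ss i, ks i))
      (by simpa using hJne)
    rw [List.map_map, List.map_map, List.map_map] at step2
    exact SubT.trans step1 (SubT.trans step2 (SubT.arrowMono h1 h2))
/-- beta-soundness of the subtyping preorders. -/
theorem beta_soundness :
    (∀ (n : ℕ) (ds : Fin n → TyD) (ts : Fin n → TyT) (δ : TyD) (τ : TyT),
      ¬ SubT .omega τ →
      (SubD (InterD (List.ofFn fun i => TyD.arrow (ds i) (ts i))) (.arrow δ τ) ↔
        ∃ J : List (Fin n), J ≠ [] ∧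
          SubD δ (InterD (J.map ds)) ∧ SubT (InterT (J.map ts)) τ)) ∧
    (∀ (n : ℕ) (ss : Fin n → TyS) (ks : Fin n → TyC) (σ : TyS) (κ : TyC),
      ¬ SubC .omega κ →
      (SubT (InterT (List.ofFn fun i => TyT.arrow (ss i) (ks i))) (.arrow σ κ) ↔
        ∃ J : List (Fin n), J ≠ [] ∧
          SubS σ (InterS (J.map ss)) ∧ SubC (InterC (J.map ks)) κ)) := by
  exact ⟨beta_soundness_D, beta_soundness_T⟩
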